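/- arXiv:1810.04658 — 5 statements merged into one kernel-verified Lean document; each statement's English description precedes it below -/
import Mathlib

section
/- The function D(r,t) = (a₃ + a₄t)^((2a₂/a₄) - 1) · G(r·(a₃ + a₄t)^(-a₂/a₄)) satisfies the first-order PDE a₂·r·∂D/∂r + (a₃ + a₄t)·∂D/∂t = (2a₂ - a₄)·D for every differentiable function G : ℝ → ℝ, at every point (r,t) where a₃ + a₄t > 0. -/
theorem stmt_0 (a₂ a₃ a₄ : ℝ) (ha₄ : a₄ ≠ 0) (G : ℝ → ℝ) (hG : Differentiable ℝ G)
    (D : ℝ → ℝ → ℝ)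
    (hD : ∀ r t : ℝ, D r t =
      (a₃ + a₄ * t) ^ (2 * a₂ / a₄ - 1) * G (r * (a₃ + a₄ * t) ^ (-(a₂ / a₄)))) :
    ∀ r t : ℝ, 0 < a₃ + a₄ * t →
      a₂ * r * deriv (fun r' => D r' t) r + (a₃ + a₄ * t) * deriv (fun t' => D r t') t
        = (2 * a₂ - a₄) * D r t := by
  intro r t hu
  set u : ℝ := a₃ + a₄ * t with hu_def
  set c : ℝ := 2 * a₂ / a₄ - 1 with hc_def
  set b : ℝ := -(a₂ / a₄) with hb_def
  have hune : u ≠ 0 := hu.ne'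
  -- derivative in r
  have h1 : HasDerivAt (fun r' : ℝ => D r' t) (u ^ c * (deriv G (r * u ^ b) * u ^ b)) r := by
    have hlin : HasDerivAt (fun r' : ℝ => r' * u ^ b) (u ^ b) r := by
      simpa using (hasDerivAt_id r).mul_const (u ^ b)
    have hcomp : HasDerivAt (fun r' : ℝ => G (r' * u ^ b)) (deriv G (r * u ^ b) * u ^ b) r :=
      (hG (r * u ^ b)).hasDerivAt.comp r hlin
    have := hcomp.const_mul (u ^ c)
    refine HasDerivAt.congr_of_eventuallyEq this ?_
    filter_upwards with r'
    rw [hD r' t]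
  -- derivative in t
  have haff : HasDerivAt (fun t' : ℝ => a₃ + a₄ * t') a₄ t := by
    exact (((hasDerivAt_id' t).const_mul a₄).const_add a₃).congr_deriv (mul_one a₄)
  have hpow : ∀ p : ℝ, HasDerivAt (fun t' : ℝ => (a₃ + a₄ * t') ^ p) (p * u ^ (p - 1) * a₄) t := by
    intro p
    have h := (Real.hasDerivAt_rpow_const (x := u) (p := p) (Or.inl hune)).comp t haff
    simpa [mul_assoc, Function.comp_def] using h
  have h2 : HasDerivAt (fun t' : ℝ => D r t')
      ((c * u ^ (c - 1) * a₄) * G (r * u ^ b)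
        + u ^ c * (deriv G (r * u ^ b) * (r * (b * u ^ (b - 1) * a₄)))) t := by
    have hinner : HasDerivAt (fun t' : ℝ => r * (a₃ + a₄ * t') ^ b)
        (r * (b * u ^ (b - 1) * a₄)) t := (hpow b).const_mul r
    have hGin : HasDerivAt (fun t' : ℝ => G (r * (a₃ + a₄ * t') ^ b))
        (deriv G (r * u ^ b) * (r * (b * u ^ (b - 1) * a₄))) t :=
      (hG (r * u ^ b)).hasDerivAt.comp t hinner
    have := (hpow c).mul hGin
    refine HasDerivAt.congr_of_eventuallyEq this ?_
    filter_upwards with t'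
    rw [hD r t']; rfl
  rw [h1.deriv, h2.deriv, hD r t]
  have e1 : u ^ (c - 1) = u ^ c / u := by rw [Real.rpow_sub hu, Real.rpow_one]
  have e2 : u ^ (b - 1) = u ^ b / u := by rw [Real.rpow_sub hu, Real.rpow_one]
  rw [e1, e2, hc_def, hb_def]
  field_simp
  ring
end

section
/- The function Γ(r,t) = (a₃ + a₄t)^(-1) · F((r + a₁/a₂)·(a₃ + a₄t)^(-a₂/a₄)) satisfies the PDE (a₁ + a₂r)·∂Γ/∂r + (a₃ + a₄t)·∂Γ/∂t + a₄·Γ = 0 for every differentiable F, at every point with a₃ + a₄t > 0. -/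
theorem stmt_2 (a₁ a₂ a₃ a₄ : ℝ) (ha₂ : a₂ ≠ 0) (ha₄ : a₄ ≠ 0)
    (F : ℝ → ℝ) (hF : Differentiable ℝ F)
    (Γ : ℝ → ℝ → ℝ)
    (hΓ : ∀ r t : ℝ, Γ r t =
      (a₃ + a₄ * t) ^ (-1 : ℝ) * F ((r + a₁ / a₂) * (a₃ + a₄ * t) ^ (-(a₂ / a₄)))) :
    ∀ r t : ℝ, 0 < a₃ + a₄ * t →
      (a₁ + a₂ * r) * deriv (fun r' => Γ r' t) r
        + (a₃ + a₄ * t) * deriv (fun t' => Γ r t') t + a₄ * Γ r t = 0 := by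
  intro r t hs
  set s : ℝ := a₃ + a₄ * t with hsdef
  set c : ℝ := a₂ / a₄ with hcdef
  set u : ℝ := (r + a₁ / a₂) * s ^ (-c) with hudef
  -- r-partial
  have hi : HasDerivAt (fun r' => (r' + a₁ / a₂) * s ^ (-c)) (s ^ (-c)) r := by
    simpa using ((hasDerivAt_id r).add_const (a₁ / a₂)).mul_const (s ^ (-c))
  have h1 : HasDerivAt (fun r' => Γ r' t)
      (s ^ (-1 : ℝ) * (deriv F u * s ^ (-c))) r := by
    have := (((hF u).hasDerivAt).comp r hi).const_mul (s ^ (-1 : ℝ))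
    refine this.congr_of_eventuallyEq ?_
    filter_upwards with r'
    rw [hΓ r' t]; rfl
  -- t-partial
  have hst : HasDerivAt (fun t' => a₃ + a₄ * t') a₄ t := by
    simpa using ((hasDerivAt_id t).const_mul a₄).const_add a₃
  have hp1 : HasDerivAt (fun t' => (a₃ + a₄ * t') ^ (-1 : ℝ))
      ((-1) * s ^ ((-1 : ℝ) - 1) * a₄) t :=
    by have := (Real.hasDerivAt_rpow_const (p := (-1 : ℝ)) (Or.inl hs.ne')).comp t hst; exact this
  have hp2 : HasDerivAt (fun t' => (a₃ + a₄ * t') ^ (-c))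
      ((-c) * s ^ (-c - 1) * a₄) t :=
    by have := (Real.hasDerivAt_rpow_const (p := -c) (Or.inl hs.ne')).comp t hst; exact this
  have hu2 : HasDerivAt (fun t' => (r + a₁ / a₂) * (a₃ + a₄ * t') ^ (-c))
      ((r + a₁ / a₂) * ((-c) * s ^ (-c - 1) * a₄)) t := hp2.const_mul _
  have hFu : HasDerivAt (fun t' => F ((r + a₁ / a₂) * (a₃ + a₄ * t') ^ (-c)))
      (deriv F u * ((r + a₁ / a₂) * ((-c) * s ^ (-c - 1) * a₄))) t :=
    ((hF u).hasDerivAt).comp t hu2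
  have h2 : HasDerivAt (fun t' => Γ r t')
      ((-1) * s ^ ((-1 : ℝ) - 1) * a₄ * F u
        + s ^ (-1 : ℝ) * (deriv F u * ((r + a₁ / a₂) * ((-c) * s ^ (-c - 1) * a₄)))) t := by
    have := hp1.mul hFu
    refine this.congr_of_eventuallyEq ?_
    filter_upwards with t'
    rw [hΓ r t']; rfl
  rw [h1.deriv, h2.deriv, hΓ r t]
  have e1 : s ^ ((-1 : ℝ) - 1) = s ^ (-1 : ℝ) * s ^ (-1 : ℝ) := by
    rw [← Real.rpow_add hs]; norm_num
  have e2 : s ^ (-c - 1) = s ^ (-c) * s ^ (-1 : ℝ) := by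
    rw [← Real.rpow_add hs]; ring_nf
  have hA : s ^ (-1 : ℝ) = s⁻¹ := Real.rpow_neg_one s
  rw [e1, e2, hA]
  have ha : a₁ + a₂ * r = a₂ * (r + a₁ / a₂) := by field_simp; ring
  have hc : c * a₄ = a₂ := by rw [hcdef]; field_simp
  rw [ha]
  set q := r + a₁ / a₂ with hq
  set B := s ^ (-c) with hB
  set Fu := F u with hFu'
  set D := deriv F u with hD
  rw [← hc]
  field_simp
  ring
end

section
/- The function D(r,t) = (a₃ + a₄t)^((2a₂/a₄) - 1) · G((r + a₁/a₂)·(a₃ + a₄t)^(-a₂/a₄)) satisfies the PDE (a₁ + a₂r)·∂D/∂r + (a₃ + a₄t)·∂D/∂t = (2a₂ - a₄)·D for every differentiable G, at every point with a₃ + a₄t > 0. -/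
theorem stmt_3 (a₁ a₂ a₃ a₄ : ℝ) (ha₂ : a₂ ≠ 0) (ha₄ : a₄ ≠ 0)
    (G : ℝ → ℝ) (hG : Differentiable ℝ G)
    (D : ℝ → ℝ → ℝ)
    (hD : ∀ r t : ℝ, D r t =
      (a₃ + a₄ * t) ^ (2 * a₂ / a₄ - 1) * G ((r + a₁ / a₂) * (a₃ + a₄ * t) ^ (-(a₂ / a₄)))) :
    ∀ r t : ℝ, 0 < a₃ + a₄ * t →
      (a₁ + a₂ * r) * deriv (fun r' => D r' t) r
        + (a₃ + a₄ * t) * deriv (fun t' => D r t') t = (2 * a₂ - a₄) * D r t := by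
  intro r t ht
  have hs : a₃ + a₄ * t ≠ 0 := ne_of_gt ht
  set s : ℝ := a₃ + a₄ * t with hsdef
  set c : ℝ := 2 * a₂ / a₄ - 1 with hcdef
  set b : ℝ := -(a₂ / a₄) with hbdef
  set u : ℝ := r + a₁ / a₂ with hudef
  set x : ℝ := u * s ^ b with hxdef
  -- derivative in r
  have hr : HasDerivAt (fun r' => D r' t) (s ^ c * (deriv G x * s ^ b)) r := by
    have heq : (fun r' => D r' t)
        = fun r' => s ^ c * G ((r' + a₁ / a₂) * s ^ b) := by
      funext r'; rw [hD r' t]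
    rw [heq]
    have hlin : HasDerivAt (fun r' : ℝ => (r' + a₁ / a₂) * s ^ b) (1 * s ^ b) r := by
      exact ((hasDerivAt_id r).add_const (a₁ / a₂)).mul_const (s ^ b)
    have := (((hG x).hasDerivAt).comp r hlin).const_mul (s ^ c)
    simpa [hxdef, mul_comm, mul_assoc, mul_left_comm] using this
  -- derivative in t
  have hst : HasDerivAt (fun t' : ℝ => a₃ + a₄ * t') a₄ t := by
    simpa using ((hasDerivAt_id t).const_mul a₄).const_add a₃
  have hg1 : HasDerivAt (fun t' : ℝ => (a₃ + a₄ * t') ^ c) (c * s ^ (c - 1) * a₄) t :=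
    by have := (Real.hasDerivAt_rpow_const (p := c) (Or.inl hs)).comp t hst; exact this
  have hg2 : HasDerivAt (fun t' : ℝ => G (u * (a₃ + a₄ * t') ^ b))
      (deriv G x * (u * (b * s ^ (b - 1) * a₄))) t := by
    have hinner : HasDerivAt (fun t' : ℝ => u * (a₃ + a₄ * t') ^ b)
        (u * (b * s ^ (b - 1) * a₄)) t := by
      have := ((Real.hasDerivAt_rpow_const (p := b) (Or.inl hs)).comp t hst).const_mul u
      simpa [mul_assoc] using this
    exact ((hG x).hasDerivAt).comp t hinner
  have htder : HasDerivAt (fun t' => D r t')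
      (c * s ^ (c - 1) * a₄ * G x + s ^ c * (deriv G x * (u * (b * s ^ (b - 1) * a₄)))) t := by
    have heq : (fun t' => D r t')
        = fun t' => (a₃ + a₄ * t') ^ c * G (u * (a₃ + a₄ * t') ^ b) := by
      funext t'; rw [hD r t']
    rw [heq]
    exact hg1.mul hg2
  rw [hr.deriv, htder.deriv, hD r t]
  have hsc : s * s ^ (c - 1) = s ^ c := by
    rw [show c = 1 + (c - 1) by ring, Real.rpow_add ht, Real.rpow_one]; ring_nf
  have hsb : s * s ^ (b - 1) = s ^ b := by
    rw [show b = 1 + (b - 1) by ring, Real.rpow_add ht, Real.rpow_one]; ring_nf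
  have key : s * (c * s ^ (c - 1) * a₄ * G x + s ^ c * (deriv G x * (u * (b * s ^ (b - 1) * a₄))))
      = c * a₄ * s ^ c * G x + s ^ c * deriv G x * u * b * a₄ * s ^ b := by
    linear_combination (c * a₄ * G x) * hsc + (s ^ c * deriv G x * u * a₄ * b) * hsb
  rw [key]
  have hca : c * a₄ = 2 * a₂ - a₄ := by rw [hcdef]; field_simp
  have hub : u * b * a₄ = -(a₁ + a₂ * r) := by rw [hudef, hbdef]; field_simp; ring
  linear_combination (s ^ c * G x) * hca + (s ^ c * deriv G x * s ^ b) * hub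
end

section
/- If D : ℝ × ℝ → ℝ is twice continuously differentiable and satisfies (a₁ + a₂r)·∂D/∂r + (a₃ + a₄t)·∂D/∂t = (2a₂ - a₄)·D everywhere, then its r-derivative D_r = ∂D/∂r satisfies (a₁ + a₂r)·∂D_r/∂r + (a₃ + a₄t)·∂D_r/∂t = (a₂ - a₄)·D_r everywhere. That is, the determining equation for D_r is automatically implied by the determining equation for D. -/
theorem stmt_5 (a₁ a₂ a₃ a₄ : ℝ) (D : ℝ → ℝ → ℝ)
    (hD : ContDiff ℝ 2 (fun p : ℝ × ℝ => D p.1 p.2))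
    (hpde : ∀ r t : ℝ,
      (a₁ + a₂ * r) * deriv (fun r' => D r' t) r
        + (a₃ + a₄ * t) * deriv (fun t' => D r t') t = (2 * a₂ - a₄) * D r t) :
    ∀ r t : ℝ,
      (a₁ + a₂ * r) * deriv (fun r' => deriv (fun r'' => D r'' t) r') r
        + (a₃ + a₄ * t) * deriv (fun t' => deriv (fun r' => D r' t') r) t
        = (a₂ - a₄) * deriv (fun r' => D r' t) r := by
  intro r t
  set F : ℝ × ℝ → ℝ := fun p => D p.1 p.2 with hFdef
  have hF1 : Differentiable ℝ F := hD.differentiable two_ne_zero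
  have hF' : Differentiable ℝ (fderiv ℝ F) :=
    (hD.fderiv_right (m := 1) le_rfl).differentiable one_ne_zero
  -- derivative along the curve r' ↦ (r', t)
  have keyr : ∀ (G : ℝ × ℝ → ℝ), Differentiable ℝ G → ∀ (r t : ℝ),
      HasDerivAt (fun r' => G (r', t)) (fderiv ℝ G (r, t) (1, 0)) r := by
    intro G hG r t
    have hc : HasDerivAt (fun r' : ℝ => ((r' : ℝ), t)) ((1 : ℝ), (0 : ℝ)) r :=
      HasDerivAt.prodMk (hasDerivAt_id r) (hasDerivAt_const r t)
    exact (hG (r, t)).hasFDerivAt.comp_hasDerivAt r hc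
  have keyt : ∀ (G : ℝ × ℝ → ℝ), Differentiable ℝ G → ∀ (r t : ℝ),
      HasDerivAt (fun t' => G (r, t')) (fderiv ℝ G (r, t) (0, 1)) t := by
    intro G hG r t
    have hc : HasDerivAt (fun t' : ℝ => ((r : ℝ), t')) ((0 : ℝ), (1 : ℝ)) t :=
      HasDerivAt.prodMk (hasDerivAt_const t r) (hasDerivAt_id t)
    exact (hG (r, t)).hasFDerivAt.comp_hasDerivAt t hc
  -- first derivatives as fderiv
  have h1 : ∀ r t : ℝ, deriv (fun r' => D r' t) r = fderiv ℝ F (r, t) (1, 0) := by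
    intro r t
    exact (keyr F hF1 r t).deriv
  have h2 : ∀ r t : ℝ, deriv (fun t' => D r t') t = fderiv ℝ F (r, t) (0, 1) := by
    intro r t
    exact (keyt F hF1 r t).deriv
  set f'' := fderiv ℝ (fderiv ℝ F) (r, t) with hf''
  -- derivative of r' ↦ fderiv F (r', t) at r
  have hAr : HasDerivAt (fun r' => fderiv ℝ F (r', t)) (f'' (1, 0)) r := by
    have hc : HasDerivAt (fun r' : ℝ => ((r' : ℝ), t)) ((1 : ℝ), (0 : ℝ)) r :=
      HasDerivAt.prodMk (hasDerivAt_id r) (hasDerivAt_const r t)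
    exact (hF' (r, t)).hasFDerivAt.comp_hasDerivAt r hc
  have hAt : HasDerivAt (fun t' => fderiv ℝ F (r, t')) (f'' (0, 1)) t := by
    have hc : HasDerivAt (fun t' : ℝ => ((r : ℝ), t')) ((0 : ℝ), (1 : ℝ)) t :=
      HasDerivAt.prodMk (hasDerivAt_const t r) (hasDerivAt_id t)
    exact (hF' (r, t)).hasFDerivAt.comp_hasDerivAt t hc
  have hP : HasDerivAt (fun r' => fderiv ℝ F (r', t) (1, 0)) (f'' (1, 0) (1, 0)) r :=
    (ContinuousLinearMap.apply ℝ ℝ ((1 : ℝ), (0 : ℝ))).hasFDerivAt.comp_hasDerivAt r hAr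
  have hQ : HasDerivAt (fun r' => fderiv ℝ F (r', t) (0, 1)) (f'' (1, 0) (0, 1)) r :=
    (ContinuousLinearMap.apply ℝ ℝ ((0 : ℝ), (1 : ℝ))).hasFDerivAt.comp_hasDerivAt r hAr
  have hS : HasDerivAt (fun t' => fderiv ℝ F (r, t') (1, 0)) (f'' (0, 1) (1, 0)) t :=
    (ContinuousLinearMap.apply ℝ ℝ ((1 : ℝ), (0 : ℝ))).hasFDerivAt.comp_hasDerivAt t hAt
  -- symmetry of second derivative
  have hsymm : f'' (1, 0) (0, 1) = f'' (0, 1) (1, 0) := by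
    exact second_derivative_symmetric (fun y => (hF1 y).hasFDerivAt)
      (hF' (r, t)).hasFDerivAt _ _
  -- differentiate the PDE in r
  have hlin : HasDerivAt (fun r' : ℝ => a₁ + a₂ * r') a₂ r := by
    simpa using ((hasDerivAt_id r).const_mul a₂).const_add a₁
  have hLHS : HasDerivAt
      (fun r' => (a₁ + a₂ * r') * fderiv ℝ F (r', t) (1, 0)
        + (a₃ + a₄ * t) * fderiv ℝ F (r', t) (0, 1))
      (a₂ * fderiv ℝ F (r, t) (1, 0) + (a₁ + a₂ * r) * (f'' (1, 0) (1, 0))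
        + (a₃ + a₄ * t) * (f'' (1, 0) (0, 1))) r :=
    (hlin.mul hP).add (hQ.const_mul _)
  have hRHS : HasDerivAt (fun r' => (2 * a₂ - a₄) * F (r', t))
      ((2 * a₂ - a₄) * fderiv ℝ F (r, t) (1, 0)) r :=
    (keyr F hF1 r t).const_mul _
  have heqfun : (fun r' => (a₁ + a₂ * r') * fderiv ℝ F (r', t) (1, 0)
        + (a₃ + a₄ * t) * fderiv ℝ F (r', t) (0, 1))
      = (fun r' => (2 * a₂ - a₄) * F (r', t)) := by
    funext r'
    have := hpde r' t
    rw [h1 r' t, h2 r' t] at this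
    exact this
  rw [heqfun] at hLHS
  have hkey : a₂ * fderiv ℝ F (r, t) (1, 0) + (a₁ + a₂ * r) * (f'' (1, 0) (1, 0))
        + (a₃ + a₄ * t) * (f'' (1, 0) (0, 1))
      = (2 * a₂ - a₄) * fderiv ℝ F (r, t) (1, 0) := hLHS.unique hRHS
  -- rewrite the goal
  have g1 : deriv (fun r' => deriv (fun r'' => D r'' t) r') r = f'' (1, 0) (1, 0) := by
    have : (fun r' => deriv (fun r'' => D r'' t) r') = fun r' => fderiv ℝ F (r', t) (1, 0) := by
      funext r'; exact h1 r' t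
    rw [this]; exact hP.deriv
  have g2 : deriv (fun t' => deriv (fun r' => D r' t') r) t = f'' (0, 1) (1, 0) := by
    have : (fun t' => deriv (fun r' => D r' t') r) = fun t' => fderiv ℝ F (r, t') (1, 0) := by
      funext t'; exact h1 r t'
    rw [this]; exact hS.deriv
  rw [g1, g2, h1 r t]
  rw [hsymm] at hkey
  linarith
end

section
/- If Γ : ℝ × ℝ → ℝ is C¹ and satisfies a₂·r·∂Γ/∂r + (a₃ + a₄t)·∂Γ/∂t + a₄·Γ = 0 on the region {(r,t) : r > 0, a₃ + a₄t > 0}, with a₂ ≠ 0 and a₄ ≠ 0, then Γ is constant along the scaled curves in the sense that for all ε and all (r,t) in the region with (e^(a₂ε)·r, (e^(a₄ε)(a₃+a₄t) - a₃)/a₄) also in the region, Γ(e^(a₂ε)·r, (e^(a₄ε)(a₃+a₄t) - a₃)/a₄) = e^(-a₄ε)·Γ(r,t). -/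
theorem stmt_9 (a₂ a₃ a₄ : ℝ) (ha₂ : a₂ ≠ 0) (ha₄ : a₄ ≠ 0)
    (Γ : ℝ → ℝ → ℝ)
    (hΓ : ContDiffOn ℝ 1 (fun p : ℝ × ℝ => Γ p.1 p.2)
      {p : ℝ × ℝ | 0 < p.1 ∧ 0 < a₃ + a₄ * p.2})
    (hpde : ∀ r t : ℝ, 0 < r → 0 < a₃ + a₄ * t →
      a₂ * r * deriv (fun r' => Γ r' t) r + (a₃ + a₄ * t) * deriv (fun t' => Γ r t') t
        + a₄ * Γ r t = 0) :
    ∀ ε r t : ℝ, 0 < r → 0 < a₃ + a₄ * t →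
      0 < Real.exp (a₂ * ε) * r →
      0 < a₃ + a₄ * ((Real.exp (a₄ * ε) * (a₃ + a₄ * t) - a₃) / a₄) →
      Γ (Real.exp (a₂ * ε) * r) ((Real.exp (a₄ * ε) * (a₃ + a₄ * t) - a₃) / a₄)
        = Real.exp (-a₄ * ε) * Γ r t := by
  intro ε r t hr ht _ _
  set U : Set (ℝ × ℝ) := {p : ℝ × ℝ | 0 < p.1 ∧ 0 < a₃ + a₄ * p.2} with hUdef
  have hUopen : IsOpen U := by
    have h1 : IsOpen {p : ℝ × ℝ | 0 < p.1} := isOpen_lt continuous_const continuous_fst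
    have h2 : IsOpen {p : ℝ × ℝ | 0 < a₃ + a₄ * p.2} :=
      isOpen_lt continuous_const (by continuity)
    exact h1.inter h2
  set f : ℝ × ℝ → ℝ := fun p => Γ p.1 p.2 with hfdef
  set L : ℝ × ℝ → (ℝ × ℝ →L[ℝ] ℝ) := fun p => fderiv ℝ f p with hLdef
  have hdiff : ∀ p ∈ U, HasFDerivAt f (L p) p := by
    intro p hp
    exact ((hΓ.differentiableOn one_ne_zero p hp).differentiableAt
      (hUopen.mem_nhds hp)).hasFDerivAt
  have hlin : ∀ p : ℝ × ℝ, ∀ x y : ℝ, L p (x, y) = x * L p (1, 0) + y * L p (0, 1) := by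
    intro p x y
    have : (x, y) = x • ((1 : ℝ), (0 : ℝ)) + y • ((0 : ℝ), (1 : ℝ)) := by
      simp [Prod.smul_def]
    rw [this, map_add, map_smul, map_smul]
    simp
  have hpart : ∀ p ∈ U,
      a₂ * p.1 * (L p (1, 0)) + (a₃ + a₄ * p.2) * (L p (0, 1)) + a₄ * f p = 0 := by
    intro p hp
    have h1 : HasDerivAt (fun r' => Γ r' p.2) (L p (1, 0)) p.1 := by
      have hg : HasDerivAt (fun r' : ℝ => (r', p.2)) ((1 : ℝ), (0 : ℝ)) p.1 :=
        (hasDerivAt_id p.1).prodMk (hasDerivAt_const p.1 p.2)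
      have := (hdiff p hp).comp_hasDerivAt p.1 (by simpa using hg)
      exact this
    have h2 : HasDerivAt (fun t' => Γ p.1 t') (L p (0, 1)) p.2 := by
      have hg : HasDerivAt (fun t' : ℝ => (p.1, t')) ((0 : ℝ), (1 : ℝ)) p.2 :=
        (hasDerivAt_const p.2 p.1).prodMk (hasDerivAt_id p.2)
      have := (hdiff p hp).comp_hasDerivAt p.2 (by simpa using hg)
      exact this
    have := hpde p.1 p.2 hp.1 hp.2
    rw [h1.deriv, h2.deriv] at this
    exact this
  set c : ℝ → ℝ × ℝ := fun s =>
    (Real.exp (a₂ * s) * r, (Real.exp (a₄ * s) * (a₃ + a₄ * t) - a₃) / a₄) with hcdef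
  have hc2 : ∀ s, a₃ + a₄ * ((Real.exp (a₄ * s) * (a₃ + a₄ * t) - a₃) / a₄)
      = Real.exp (a₄ * s) * (a₃ + a₄ * t) := by
    intro s; field_simp; ring
  have hcU : ∀ s, c s ∈ U := by
    intro s
    constructor
    · exact mul_pos (Real.exp_pos _) hr
    · show 0 < a₃ + a₄ * ((Real.exp (a₄ * s) * (a₃ + a₄ * t) - a₃) / a₄)
      rw [hc2 s]
      exact mul_pos (Real.exp_pos _) ht
  have hc' : ∀ s, HasDerivAt c
      (a₂ * Real.exp (a₂ * s) * r, Real.exp (a₄ * s) * (a₃ + a₄ * t)) s := by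
    intro s
    have h1 : HasDerivAt (fun s => Real.exp (a₂ * s) * r)
        (a₂ * Real.exp (a₂ * s) * r) s := by
      have := (((hasDerivAt_id s).const_mul a₂).exp).mul_const r
      simpa [mul_comm] using this
    have h2 : HasDerivAt (fun s => (Real.exp (a₄ * s) * (a₃ + a₄ * t) - a₃) / a₄)
        (Real.exp (a₄ * s) * (a₃ + a₄ * t)) s := by
      have h := (((((hasDerivAt_id s).const_mul a₄).exp).mul_const
        (a₃ + a₄ * t)).sub_const a₃).div_const a₄
      convert h using 1
      · rfl
      · rfl
      · rfl
      field_simp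
      rfl
    exact h1.prodMk h2
  set g : ℝ → ℝ := fun s => f (c s) with hgdef
  have hg' : ∀ s, HasDerivAt g (-a₄ * g s) s := by
    intro s
    have := (hdiff (c s) (hcU s)).comp_hasDerivAt s (hc' s)
    have key := hpart (c s) (hcU s)
    have hval : L (c s) (a₂ * Real.exp (a₂ * s) * r, Real.exp (a₄ * s) * (a₃ + a₄ * t))
        = -a₄ * g s := by
      rw [hlin]
      have e1 : a₂ * Real.exp (a₂ * s) * r = a₂ * (c s).1 := by simp [hcdef]; ring
      have e2 : Real.exp (a₄ * s) * (a₃ + a₄ * t) = a₃ + a₄ * (c s).2 := (hc2 s).symm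
      rw [e1, e2]
      have : g s = f (c s) := rfl
      nlinarith [key]
    rw [hval] at this
    exact this
  have hh : ∀ s, HasDerivAt (fun s => Real.exp (a₄ * s) * g s) 0 s := by
    intro s
    have he : HasDerivAt (fun s => Real.exp (a₄ * s)) (a₄ * Real.exp (a₄ * s)) s := by
      have := ((hasDerivAt_id s).const_mul a₄).exp
      simpa [mul_comm] using this
    have := he.mul (hg' s)
    have heq : a₄ * Real.exp (a₄ * s) * g s + Real.exp (a₄ * s) * (-a₄ * g s) = 0 := by ring
    rwa [heq] at this
  have hconst : Real.exp (a₄ * ε) * g ε = Real.exp (a₄ * 0) * g 0 :=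
    is_const_of_deriv_eq_zero (fun s => (hh s).differentiableAt)
      (fun s => (hh s).deriv) ε 0
  have hc0 : c 0 = (r, t) := by
    simp [hcdef]
    field_simp
  have hg0 : g 0 = Γ r t := by
    rw [hgdef]; simp only; rw [hc0]
  rw [hg0] at hconst
  simp only [mul_zero, Real.exp_zero, one_mul] at hconst
  have : g ε = Real.exp (-a₄ * ε) * Γ r t := by
    rw [neg_mul, Real.exp_neg, ← hconst]
    field_simp
  exact this
end
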